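/- Consider the space c of convergent complex sequences with the sup norm and the m-homogeneous polynomial P defined by P(a)_j = (a_{j+1})^m for m ≥ 2. If a = (a_j) ∈ c with |lim_j a_j| < 1, then P^n(a) → 0; and if |lim_j a_j| > 1, then every point in some neighborhood of a has ‖P^n(·)‖_∞ → ∞. Consequently J_P = {a ∈ c : |lim_j a_j| = 1}. -/

import Mathlib

open Filter

/-- The Banach space `c` of convergent (complex) sequences, realized as the subspace of
convergent elements of `ℓ∞` (bounded sequences with the sup norm). -/
def ConvergentSeq : Set (BoundedContinuousFunction ℕ ℂ) :=
  {f | ∃ L : ℂ, Tendsto (fun j => f j) atTop (nhds L)}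

noncomputable def seqLim (a : ConvergentSeq) : ℂ := a.2.choose

lemma seqLim_spec (a : ConvergentSeq) :
    Tendsto (fun j => (a : BoundedContinuousFunction ℕ ℂ) j) atTop (nhds (seqLim a)) :=
  a.2.choose_spec

lemma seqLim_unique {a : ConvergentSeq} {L : ℂ}
    (h : Tendsto (fun j => (a : BoundedContinuousFunction ℕ ℂ) j) atTop (nhds L)) :
    seqLim a = L :=
  tendsto_nhds_unique (seqLim_spec a) h

lemma norm_limit_le (f : BoundedContinuousFunction ℕ ℂ) {L : ℂ}
    (h : Tendsto (fun j => f j) atTop (nhds L)) : ‖L‖ ≤ ‖f‖ :=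
  le_of_tendsto h.norm (Eventually.of_forall fun j => f.norm_coe_le_norm j)

lemma seqLim_continuous : Continuous (seqLim) := by
  refine (LipschitzWith.of_dist_le_mul (K := 1) (f := seqLim) fun a b => ?_).continuous
  rw [NNReal.coe_one, one_mul, Subtype.dist_eq, dist_eq_norm, dist_eq_norm]
  have h : Tendsto (fun j => (a : BoundedContinuousFunction ℕ ℂ) j
      - (b : BoundedContinuousFunction ℕ ℂ) j) atTop (nhds (seqLim a - seqLim b)) :=
    (seqLim_spec a).sub (seqLim_spec b)
  have := norm_limit_le ((a : BoundedContinuousFunction ℕ ℂ)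
      - (b : BoundedContinuousFunction ℕ ℂ)) (by simpa using h)
  simpa using this

lemma iter_coord (m : ℕ) (P : ConvergentSeq → ConvergentSeq)
    (hP : ∀ (a : ConvergentSeq) (j : ℕ), ((P a : BoundedContinuousFunction ℕ ℂ)) j
      = ((a : BoundedContinuousFunction ℕ ℂ) (j + 1)) ^ m)
    (a : ConvergentSeq) (n j : ℕ) :
    ((P^[n] a : ConvergentSeq) : BoundedContinuousFunction ℕ ℂ) j
      = ((a : BoundedContinuousFunction ℕ ℂ) (j + n)) ^ (m ^ n) := by
  induction n generalizing j with
  | zero => simp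
  | succ n ih =>
      rw [Function.iterate_succ_apply', hP, ih, ← pow_mul, ← pow_succ]
      ring_nf

theorem julia_of_power_shift_on_c (m : ℕ) (hm : 2 ≤ m)
    (P : ConvergentSeq → ConvergentSeq)
    (hP : ∀ (a : ConvergentSeq) (j : ℕ), ((P a : BoundedContinuousFunction ℕ ℂ)) j
      = ((a : BoundedContinuousFunction ℕ ℂ) (j + 1)) ^ m) :
    (∀ (a : ConvergentSeq) (L : ℂ),
        Tendsto (fun j => (a : BoundedContinuousFunction ℕ ℂ) j) atTop (nhds L) → ‖L‖ < 1 →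
        Tendsto (fun n => P^[n] a) atTop
          (nhds ⟨0, 0, by simp⟩)) ∧
    (∀ (a : ConvergentSeq) (L : ℂ),
        Tendsto (fun j => (a : BoundedContinuousFunction ℕ ℂ) j) atTop (nhds L) → 1 < ‖L‖ →
        ∃ ε > (0 : ℝ), ∀ b : ConvergentSeq,
          ‖(b : BoundedContinuousFunction ℕ ℂ) - (a : BoundedContinuousFunction ℕ ℂ)‖ < ε →
          Tendsto (fun n => ‖((P^[n] b : ConvergentSeq) : BoundedContinuousFunction ℕ ℂ)‖)
            atTop atTop) ∧
    frontier {a : ConvergentSeq | Tendsto (fun n => P^[n] a) atTop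
        (nhds ⟨0, 0, by simp⟩)} =
      {a : ConvergentSeq | ∃ L : ℂ,
        Tendsto (fun j => (a : BoundedContinuousFunction ℕ ℂ) j) atTop (nhds L) ∧ ‖L‖ = 1} := by
  have hm1 : (1 : ℕ) < m := by omega
  have hmn : ∀ n : ℕ, n ≤ m ^ n := fun n => (Nat.lt_pow_self hm1 : n < m ^ n).le
  -- Part 1
  have part1 : ∀ (a : ConvergentSeq) (L : ℂ),
      Tendsto (fun j => (a : BoundedContinuousFunction ℕ ℂ) j) atTop (nhds L) → ‖L‖ < 1 →
      Tendsto (fun n => P^[n] a) atTop (nhds ⟨0, 0, by simp⟩) := by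
    intro a L hL hL1
    set r : ℝ := (1 + ‖L‖) / 2 with hr
    have hr0 : 0 ≤ r := by positivity
    have hr1 : r < 1 := by rw [hr]; linarith
    have hev : ∀ᶠ j in atTop, ‖(a : BoundedContinuousFunction ℕ ℂ) j‖ ≤ r := by
      filter_upwards [hL.norm.eventually (eventually_lt_nhds (show ‖L‖ < r by rw [hr]; linarith))]
        with j hj using hj.le
    obtain ⟨N, hN⟩ := eventually_atTop.1 hev
    rw [tendsto_subtype_rng]
    rw [tendsto_zero_iff_norm_tendsto_zero]
    apply squeeze_zero' (g := fun n => r ^ n)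
      (Eventually.of_forall fun n => norm_nonneg _)
    · filter_upwards [eventually_ge_atTop N] with n hn
      refine (BoundedContinuousFunction.norm_le (by positivity)).2 fun j => ?_
      rw [iter_coord m P hP a n j]
      calc ‖(a : BoundedContinuousFunction ℕ ℂ) (j + n) ^ m ^ n‖
          = ‖(a : BoundedContinuousFunction ℕ ℂ) (j + n)‖ ^ m ^ n := norm_pow _ _
        _ ≤ r ^ m ^ n := pow_le_pow_left₀ (norm_nonneg _) (hN (j + n) (by omega)) _
        _ ≤ r ^ n := pow_le_pow_of_le_one hr0 hr1.le (hmn n)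
    · exact tendsto_pow_atTop_nhds_zero_of_lt_one hr0 hr1
  -- Part 2
  have part2 : ∀ (a : ConvergentSeq) (L : ℂ),
      Tendsto (fun j => (a : BoundedContinuousFunction ℕ ℂ) j) atTop (nhds L) → 1 < ‖L‖ →
      ∃ ε > (0 : ℝ), ∀ b : ConvergentSeq,
        ‖(b : BoundedContinuousFunction ℕ ℂ) - (a : BoundedContinuousFunction ℕ ℂ)‖ < ε →
        Tendsto (fun n => ‖((P^[n] b : ConvergentSeq) : BoundedContinuousFunction ℕ ℂ)‖)
          atTop atTop := by
    intro a L hL hL1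
    set δ : ℝ := (‖L‖ - 1) / 4 with hδ
    have hδ0 : 0 < δ := by rw [hδ]; linarith
    refine ⟨δ, hδ0, fun b hb => ?_⟩
    set r : ℝ := (‖L‖ + 1) / 2 with hrr
    have hr1 : 1 < r := by rw [hrr]; linarith
    have hev : ∀ᶠ j in atTop, ‖L‖ - δ < ‖(a : BoundedContinuousFunction ℕ ℂ) j‖ :=
      hL.norm.eventually (eventually_gt_nhds (by linarith))
    obtain ⟨N, hN⟩ := eventually_atTop.1 hev
    have hbj : ∀ j, N ≤ j → r ≤ ‖(b : BoundedContinuousFunction ℕ ℂ) j‖ := by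
      intro j hj
      have h1 : ‖(b : BoundedContinuousFunction ℕ ℂ) j
          - (a : BoundedContinuousFunction ℕ ℂ) j‖ < δ :=
        lt_of_le_of_lt (by simpa using
          ((b : BoundedContinuousFunction ℕ ℂ)
            - (a : BoundedContinuousFunction ℕ ℂ)).norm_coe_le_norm j) hb
      have h2 := hN j hj
      have := norm_sub_norm_le ((a : BoundedContinuousFunction ℕ ℂ) j)
        ((b : BoundedContinuousFunction ℕ ℂ) j)
      rw [norm_sub_rev] at h1
      rw [hrr, hδ] at *
      linarith
    apply tendsto_atTop_mono' _ _ (tendsto_pow_atTop_atTop_of_one_lt hr1)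
    filter_upwards [eventually_ge_atTop 0] with n _
    calc r ^ n ≤ r ^ m ^ n := pow_le_pow_right₀ hr1.le (hmn n)
      _ ≤ ‖(b : BoundedContinuousFunction ℕ ℂ) (N + n)‖ ^ m ^ n :=
          pow_le_pow_left₀ (by linarith) (hbj (N + n) (by omega)) _
      _ = ‖((P^[n] b : ConvergentSeq) : BoundedContinuousFunction ℕ ℂ) N‖ := by
          rw [iter_coord m P hP b n N, norm_pow]
      _ ≤ _ := BoundedContinuousFunction.norm_coe_le_norm _ _
  refine ⟨part1, part2, ?_⟩
  -- Part 3
  set A : Set ConvergentSeq := {a : ConvergentSeq | Tendsto (fun n => P^[n] a) atTop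
      (nhds ⟨0, 0, by simp⟩)} with hA
  -- limit of coordinates of iterates
  have hiterlim : ∀ (a : ConvergentSeq) (n : ℕ),
      Tendsto (fun j => ((P^[n] a : ConvergentSeq) : BoundedContinuousFunction ℕ ℂ) j)
        atTop (nhds ((seqLim a) ^ m ^ n)) := by
    intro a n
    have := ((seqLim_spec a).comp (tendsto_add_atTop_nat n)).pow (m ^ n)
    simp only [Function.comp] at this
    convert this using 2 with j
    exact iter_coord m P hP a n j
  have hmemA : ∀ a : ConvergentSeq, a ∈ A ↔ ‖seqLim a‖ < 1 := by
    intro a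
    constructor
    · intro ha
      by_contra hge
      push_neg at hge
      have hv : Tendsto (fun n => ((P^[n] a : ConvergentSeq) : BoundedContinuousFunction ℕ ℂ))
          atTop (nhds 0) := tendsto_subtype_rng.1 ha
      have hn : Tendsto (fun n =>
          ‖((P^[n] a : ConvergentSeq) : BoundedContinuousFunction ℕ ℂ)‖) atTop (nhds 0) :=
        tendsto_zero_iff_norm_tendsto_zero.1 hv
      have hlb : ∀ n, (1 : ℝ) ≤
          ‖((P^[n] a : ConvergentSeq) : BoundedContinuousFunction ℕ ℂ)‖ := by
        intro n
        have h1 := norm_limit_le _ (hiterlim a n)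
        have : (1 : ℝ) ≤ ‖(seqLim a) ^ m ^ n‖ := by
          rw [norm_pow]; exact one_le_pow₀ hge
        exact le_trans this h1
      have := (hn.eventually (eventually_lt_nhds one_pos)).exists
      obtain ⟨n, hn'⟩ := this
      exact absurd (hlb n) (not_le.2 hn')
    · intro h; exact part1 a (seqLim a) (seqLim_spec a) h
  have hAopen : IsOpen A := by
    have : A = seqLim ⁻¹' (Metric.ball 0 1) := by
      ext a
      simp [hmemA a, Metric.mem_ball, dist_zero_right]
    rw [this]
    exact Metric.isOpen_ball.preimage seqLim_continuous
  have hclosure_sub : closure A ⊆ seqLim ⁻¹' (Metric.closedBall 0 1) := by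
    apply closure_minimal
    · intro a ha
      simp only [Set.mem_preimage, Metric.mem_closedBall, dist_zero_right]
      exact ((hmemA a).1 ha).le
    · exact Metric.isClosed_closedBall.preimage seqLim_continuous
  have hclosure1 : ∀ a : ConvergentSeq, ‖seqLim a‖ = 1 → a ∈ closure A := by
    intro a ha1
    rw [Metric.mem_closure_iff]
    intro ε hε
    set v := (a : BoundedContinuousFunction ℕ ℂ) with hv
    have hv1 : 1 ≤ ‖v‖ := ha1 ▸ norm_limit_le v (seqLim_spec a)
    have hv0 : 0 < ‖v‖ := by linarith
    set δ : ℝ := min (1/2) (ε / (2 * ‖v‖)) with hδdef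
    have hδ0 : 0 < δ := lt_min (by norm_num) (by positivity)
    have hδh : δ ≤ 1/2 := min_le_left _ _
    have hδε : δ ≤ ε / (2 * ‖v‖) := min_le_right _ _
    have htend : Tendsto (fun j => (((1 - δ : ℝ) : ℂ) • v) j) atTop
        (nhds (((1 - δ : ℝ) : ℂ) * seqLim a)) := by
      simpa [smul_eq_mul] using (seqLim_spec a).const_mul (((1 - δ : ℝ) : ℂ))
    refine ⟨⟨((1 - δ : ℝ) : ℂ) • v, ⟨_, htend⟩⟩, ?_, ?_⟩
    · rw [hmemA]
      have heq : seqLim ⟨((1 - δ : ℝ) : ℂ) • v, ⟨_, htend⟩⟩ = ((1 - δ : ℝ) : ℂ) * seqLim a :=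
        seqLim_unique htend
      rw [heq, norm_mul, ha1, mul_one, Complex.norm_real]
      rw [Real.norm_eq_abs, abs_of_nonneg (by linarith)]
      linarith
    · rw [Subtype.dist_eq, dist_eq_norm]
      have heq2 : v - ((1 - δ : ℝ) : ℂ) • v = ((δ : ℝ) : ℂ) • v := by
        nth_rewrite 1 [← one_smul ℂ v]
        rw [← sub_smul]
        congr 1
        push_cast
        ring
      have : ‖v - ((1 - δ : ℝ) : ℂ) • v‖ = δ * ‖v‖ := by
        rw [heq2, norm_smul, Complex.norm_real, Real.norm_eq_abs, abs_of_nonneg hδ0.le]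
      rw [show ((a : BoundedContinuousFunction ℕ ℂ)) = v from rfl, this]
      calc δ * ‖v‖ ≤ (ε / (2 * ‖v‖)) * ‖v‖ := by gcongr
        _ = ε / 2 := by field_simp
        _ < ε := by linarith
  ext a
  simp only [← hA, frontier, hAopen.interior_eq, Set.mem_diff, Set.mem_setOf_eq]
  constructor
  · rintro ⟨hc, hna⟩
    refine ⟨seqLim a, seqLim_spec a, ?_⟩
    have h1 : ‖seqLim a‖ ≤ 1 := by
      simpa [dist_zero_right] using hclosure_sub hc
    have h2 : ¬ ‖seqLim a‖ < 1 := fun h => hna ((hmemA a).2 h)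
    linarith [not_lt.1 h2]
  · rintro ⟨L, hL, hL1⟩
    have hLa : seqLim a = L := seqLim_unique hL
    refine ⟨hclosure1 a (by rw [hLa, hL1]), fun hmem => ?_⟩
    have := (hmemA a).1 hmem
    rw [hLa, hL1] at this
    exact lt_irrefl _ this
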